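/- Let q ≠ 0 with [n]_q! ≠ 0, and let μ : H_{n,q} → End(M) be any representation of the Hecke algebra on a vector space M. Then the image of the q-symmetrizer satisfies Im(μ(X_n)) = ⋂_{i=1}^{n-1} Im(μ(T_i) + 1). -/

import Mathlib

/-!
STATEMENT 3: Let `q ≠ 0` with `[n]_q! ≠ 0`, and let `μ : H_{n,q} → End(M)` be any
representation of the Hecke algebra on a vector space `M`.  Then the image of the
`q`-symmetrizer satisfies `Im(μ(X_n)) = ⋂_{i=1}^{n-1} Im(μ(T_i) + 1)`.

The Hecke algebra is presented by its standard basis `{T_σ}` with `T_1 = 1` and the usual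
multiplication rule; `X_n = (1/[n]_q!) Σ_σ T_σ`, and the Coxeter length of `σ ∈ S_n` is its
inversion number.
-/

open Finset

/-- The Coxeter length of a permutation in `S_n` = its number of inversions. -/
def coxLen {n : ℕ} (σ : Equiv.Perm (Fin n)) : ℕ :=
  ((univ : Finset (Fin n × Fin n)).filter fun x => x.1 < x.2 ∧ σ x.2 < σ x.1).card

/-- The adjacent transposition `σ_i = (i, i+1)` in `S_n`. -/
def adjSwap {n : ℕ} (i : ℕ) (hi : i + 1 < n) : Equiv.Perm (Fin n) :=
  Equiv.swap ⟨i, Nat.lt_of_succ_lt hi⟩ ⟨i + 1, hi⟩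

lemma adjSwap_apply_lo {n : ℕ} (i : ℕ) (hi : i + 1 < n) :
    adjSwap i hi ⟨i, Nat.lt_of_succ_lt hi⟩ = ⟨i + 1, hi⟩ := by
  simp [adjSwap]

lemma adjSwap_apply_hi {n : ℕ} (i : ℕ) (hi : i + 1 < n) :
    adjSwap i hi ⟨i + 1, hi⟩ = ⟨i, Nat.lt_of_succ_lt hi⟩ := by
  simp [adjSwap]

lemma adjSwap_lt_adjSwap {n : ℕ} (i : ℕ) (hi : i + 1 < n) {a b : Fin n}
    (hab : a < b) (h : ¬((a : ℕ) = i ∧ (b : ℕ) = i + 1)) :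
    adjSwap i hi a < adjSwap i hi b := by
  unfold adjSwap
  have hab' := Fin.lt_def.mp hab
  rw [Equiv.swap_apply_def, Equiv.swap_apply_def]
  split_ifs <;> simp only [Fin.ext_iff, Fin.lt_def] at * <;> omega

lemma adjSwap_mul_self {n : ℕ} (i : ℕ) (hi : i + 1 < n) :
    adjSwap i hi * adjSwap i hi = 1 := by
  simp [adjSwap, Equiv.swap_mul_self]

lemma adjSwap_inv {n : ℕ} (i : ℕ) (hi : i + 1 < n) :
    (adjSwap i hi)⁻¹ = adjSwap i hi := by
  simp [adjSwap]

lemma coxLen_one {n : ℕ} : coxLen (1 : Equiv.Perm (Fin n)) = 0 := by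
  unfold coxLen
  rw [Finset.card_eq_zero, Finset.filter_eq_empty_iff]
  rintro x - ⟨h1, h2⟩
  simp only [Equiv.Perm.one_apply] at h2
  exact absurd h1 (not_lt.mpr h2.le)

lemma coxLen_mul_adjSwap_of_lt {n : ℕ} (σ : Equiv.Perm (Fin n)) (i : ℕ) (hi : i + 1 < n)
    (h : σ ⟨i, Nat.lt_of_succ_lt hi⟩ < σ ⟨i + 1, hi⟩) :
    coxLen (σ * adjSwap i hi) = coxLen σ + 1 := by
  classical
  set i0 : Fin n := ⟨i, Nat.lt_of_succ_lt hi⟩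
  set i1 : Fin n := ⟨i + 1, hi⟩
  set s := adjSwap i hi with hs
  have hs0 : s i0 = i1 := by simp [hs, adjSwap, i0, i1]
  have hs1 : s i1 = i0 := by simp [hs, adjSwap, i0, i1]
  have hss : ∀ a, s (s a) = a := by
    intro a; simp [hs, adjSwap]
  set A := (univ : Finset (Fin n × Fin n)).filter
    fun x => x.1 < x.2 ∧ (σ * s) x.2 < (σ * s) x.1 with hA
  set B := (univ : Finset (Fin n × Fin n)).filter
    fun x => x.1 < x.2 ∧ σ x.2 < σ x.1 with hB
  have hmem : (i0, i1) ∈ A := by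
    simp only [hA, mem_filter, mem_univ, true_and]
    refine ⟨?_, ?_⟩
    · simp [i0, i1, Fin.lt_def]
    · simpa [Equiv.Perm.mul_apply, hs0, hs1] using h
  have key : (A.erase (i0, i1)).card = B.card := by
    apply Finset.card_bij' (fun x _ => (s x.1, s x.2)) (fun y _ => (s y.1, s y.2))
    · rintro ⟨a, b⟩ hx
      rw [Finset.mem_erase] at hx
      obtain ⟨hne, hx⟩ := hx
      simp only [hA, mem_filter, mem_univ, true_and] at hx
      obtain ⟨h1, h2⟩ := hx
      simp only [hB, mem_filter, mem_univ, true_and]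
      constructor
      · apply adjSwap_lt_adjSwap i hi h1
        rintro ⟨ha, hb⟩
        exact hne (by simp [Prod.ext_iff, Fin.ext_iff, i0, i1, ha, hb])
      · simpa [Equiv.Perm.mul_apply] using h2
    · rintro ⟨a, b⟩ hy
      simp only [hB, mem_filter, mem_univ, true_and] at hy
      obtain ⟨h1, h2⟩ := hy
      have hne : ¬((a : ℕ) = i ∧ (b : ℕ) = i + 1) := by
        rintro ⟨ha, hb⟩
        have : a = i0 := Fin.ext ha
        have hb' : b = i1 := Fin.ext hb
        subst this; subst hb'
        exact absurd h (not_lt.mpr h2.le)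
      rw [Finset.mem_erase]
      constructor
      · rintro hEq
        rw [Prod.ext_iff] at hEq
        obtain ⟨ha, hb⟩ := hEq
        simp only at ha hb
        have ha' : a = s i0 := by rw [← ha, hss]
        have hb' : b = s i1 := by rw [← hb, hss]
        rw [hs0] at ha'; rw [hs1] at hb'
        subst ha'; subst hb'
        exact absurd h1 (by simp [i0, i1, Fin.lt_def])
      · simp only [hA, mem_filter, mem_univ, true_and]
        exact ⟨adjSwap_lt_adjSwap i hi h1 hne, by simpa [Equiv.Perm.mul_apply, hss] using h2⟩
    · rintro ⟨a, b⟩ _; simp [hss]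
    · rintro ⟨a, b⟩ _; simp [hss]
  have : A.card = (A.erase (i0, i1)).card + 1 := by
    rw [Finset.card_erase_of_mem hmem]
    have : 0 < A.card := Finset.card_pos.mpr ⟨_, hmem⟩
    omega
  unfold coxLen
  rw [← hA, ← hB, this, key]

lemma coxLen_mul_adjSwap_of_ge {n : ℕ} (σ : Equiv.Perm (Fin n)) (i : ℕ) (hi : i + 1 < n)
    (h : ¬ σ ⟨i, Nat.lt_of_succ_lt hi⟩ < σ ⟨i + 1, hi⟩) :
    coxLen σ = coxLen (σ * adjSwap i hi) + 1 := by
  have hne : σ ⟨i + 1, hi⟩ < σ ⟨i, Nat.lt_of_succ_lt hi⟩ := by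
    rcases lt_or_eq_of_le (not_lt.mp h) with h' | h'
    · exact h'
    · exfalso
      have := σ.injective h'
      simp [Fin.ext_iff] at this
  have h2 : (σ * adjSwap i hi) ⟨i, Nat.lt_of_succ_lt hi⟩ < (σ * adjSwap i hi) ⟨i + 1, hi⟩ := by
    simpa [Equiv.Perm.mul_apply, adjSwap, Equiv.swap_apply_left, Equiv.swap_apply_right]
      using hne
  have := coxLen_mul_adjSwap_of_lt (σ * adjSwap i hi) i hi h2
  rwa [mul_assoc, adjSwap_mul_self, mul_one] at this

lemma coxLen_inv {n : ℕ} (σ : Equiv.Perm (Fin n)) : coxLen σ⁻¹ = coxLen σ := by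
  unfold coxLen
  apply Finset.card_bij' (fun x _ => (σ⁻¹ x.2, σ⁻¹ x.1)) (fun y _ => (σ y.2, σ y.1))
  · rintro ⟨a, b⟩ hx
    simp only [mem_filter, mem_univ, true_and] at hx ⊢
    obtain ⟨h1, h2⟩ := hx
    simp only [Equiv.Perm.coe_inv, Equiv.apply_symm_apply]
    exact ⟨h2, h1⟩
  · rintro ⟨a, b⟩ hy
    simp only [mem_filter, mem_univ, true_and] at hy ⊢
    obtain ⟨h1, h2⟩ := hy
    simp only [Equiv.Perm.coe_inv, Equiv.symm_apply_apply]
    exact ⟨h2, h1⟩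
  · rintro ⟨a, b⟩ _; simp
  · rintro ⟨a, b⟩ _; simp

lemma eq_one_of_no_descent {n : ℕ} (σ : Equiv.Perm (Fin n))
    (h : ∀ (i : ℕ) (hi : i + 1 < n), σ ⟨i, Nat.lt_of_succ_lt hi⟩ < σ ⟨i + 1, hi⟩) :
    σ = 1 := by
  have hsm : StrictMono σ := by
    cases n with
    | zero => intro a; exact absurd a.2 (by omega)
    | succ m =>
      rw [Fin.strictMono_iff_lt_succ]
      intro j
      have := h j.1 (by omega)
      exact this
  have hsm' : StrictMono (σ⁻¹ : Equiv.Perm (Fin n)) := by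
    intro a b hab
    rw [← hsm.lt_iff_lt]
    simpa using hab
  haveI : WellFoundedLT (Fin n) := inferInstance
  ext x
  have h1 : x ≤ σ x := hsm.le_apply
  have h2 : σ x ≤ σ⁻¹ (σ x) := hsm'.le_apply
  simp only [Equiv.Perm.coe_inv, Equiv.symm_apply_apply] at h2
  simp [le_antisymm h2 h1]

lemma exists_descent {n : ℕ} (σ : Equiv.Perm (Fin n)) (hσ : σ ≠ 1) :
    ∃ (i : ℕ) (hi : i + 1 < n), σ ⟨i + 1, hi⟩ < σ ⟨i, Nat.lt_of_succ_lt hi⟩ := by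
  by_contra hcon
  push_neg at hcon
  apply hσ
  apply eq_one_of_no_descent
  intro i hi
  have h1 := hcon i hi
  rcases lt_or_eq_of_le h1 with h' | h'
  · exact h'
  · exfalso
    have := σ.injective h'
    simp [Fin.ext_iff] at this

/-- Extend a permutation of `Fin n` to one of `Fin (n+1)` sending `last` to `p`. -/
def extPerm {n : ℕ} (p : Fin (n + 1)) (τ : Equiv.Perm (Fin n)) : Equiv.Perm (Fin (n + 1)) :=
  ((finSuccEquiv' (Fin.last n)).trans (Equiv.optionCongr τ)).trans (finSuccEquiv' p).symm

lemma extPerm_last {n : ℕ} (p : Fin (n + 1)) (τ : Equiv.Perm (Fin n)) :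
    extPerm p τ (Fin.last n) = p := by
  simp [extPerm, finSuccEquiv'_at, finSuccEquiv'_symm_none]

lemma extPerm_castSucc {n : ℕ} (p : Fin (n + 1)) (τ : Equiv.Perm (Fin n)) (i : Fin n) :
    extPerm p τ (Fin.castSucc i) = p.succAbove (τ i) := by
  have h1 : finSuccEquiv' (Fin.last n) (Fin.castSucc i) = some i := by
    rw [← Fin.succAbove_last_apply]
    exact finSuccEquiv'_succAbove _ _
  simp [extPerm, h1, finSuccEquiv'_symm_some]

lemma extPerm_bijective {n : ℕ} :
    Function.Bijective (fun x : Fin (n + 1) × Equiv.Perm (Fin n) => extPerm x.1 x.2) := by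
  rw [Fintype.bijective_iff_injective_and_card]
  constructor
  · rintro ⟨p, τ⟩ ⟨p', τ'⟩ hEq
    simp only at hEq
    have hp : p = p' := by
      rw [← extPerm_last p τ, ← extPerm_last p' τ', hEq]
    subst hp
    have hτ : τ = τ' := by
      apply Equiv.ext
      intro i
      apply Fin.succAbove_right_injective (p := p)
      rw [← extPerm_castSucc p τ i, hEq, extPerm_castSucc]
    rw [hτ]
  · simp [Fintype.card_perm, Nat.factorial_succ]

lemma cardFilterCastSuccLe {n : ℕ} (p : Fin (n + 1)) :
    ((univ : Finset (Fin n)).filter fun y => p ≤ Fin.castSucc y).card = n - p := by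
  rw [← Nat.card_Ico (p : ℕ) n]
  apply Finset.card_nbij (i := Fin.val)
  · intro y hy
    simp only [Finset.mem_coe, mem_filter, mem_univ, true_and] at hy
    rw [Finset.mem_coe, Finset.mem_Ico]
    exact ⟨by simpa [Fin.le_def] using hy, y.2⟩
  · intro y _ y' _ h
    exact Fin.ext h
  · intro m hm
    simp only [Finset.coe_filter, Set.mem_setOf_eq, Finset.mem_coe, Finset.mem_Ico] at hm ⊢
    rcases hm with ⟨h1, h2⟩
    exact ⟨⟨m, h2⟩, by simp [Fin.le_def, h1], rfl⟩

lemma coxLen_extPerm {n : ℕ} (p : Fin (n + 1)) (τ : Equiv.Perm (Fin n)) :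
    coxLen (extPerm p τ) = (n - p) + coxLen τ := by
  classical
  set σ := extPerm p τ with hσ
  set A := (univ : Finset (Fin (n+1) × Fin (n+1))).filter
    fun x => x.1 < x.2 ∧ σ x.2 < σ x.1 with hA
  have hsplit : A.card = (A.filter fun x => x.2 = Fin.last n).card +
      (A.filter fun x => ¬ x.2 = Fin.last n).card :=
    (Finset.card_filter_add_card_filter_not _).symm
  have hc1 : (A.filter fun x => x.2 = Fin.last n).card = n - p := by
    have key : ((univ : Finset (Fin n)).filter fun y => p ≤ Fin.castSucc y).card =
        (A.filter fun x => x.2 = Fin.last n).card := by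
      apply Finset.card_bij (fun y _ => (Fin.castSucc (τ⁻¹ y), Fin.last n))
      · intro y hy
        simp only [mem_filter, mem_univ, true_and] at hy
        refine Finset.mem_filter.mpr ⟨?_, rfl⟩
        rw [hA, Finset.mem_filter]
        refine ⟨mem_univ _, Fin.castSucc_lt_last _, ?_⟩
        rw [hσ, extPerm_last, extPerm_castSucc]
        rw [Fin.lt_succAbove_iff_le_castSucc]
        simpa using hy
      · intro y _ y' _ h
        simp only [Prod.mk.injEq] at h
        have := Fin.castSucc_injective _ h.1
        simpa using congrArg τ this
      · rintro ⟨a, b⟩ hx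
        simp only [Finset.mem_filter, hA, mem_univ, true_and] at hx
        obtain ⟨⟨h1, h2⟩, h3⟩ := hx
        subst h3
        have ha : a ≠ Fin.last n := Fin.ne_last_of_lt h1
        set a' := a.castPred ha with ha'
        have haa : Fin.castSucc a' = a := Fin.castSucc_castPred a ha
        refine ⟨τ a', ?_, ?_⟩
        · simp only [mem_filter, mem_univ, true_and]
          rw [← Fin.lt_succAbove_iff_le_castSucc]
          rw [hσ, extPerm_last, ← haa, extPerm_castSucc] at h2
          exact h2
        · simp [haa]
    rw [← key, cardFilterCastSuccLe]
  have hc2 : (A.filter fun x => ¬ x.2 = Fin.last n).card = coxLen τ := by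
    unfold coxLen
    symm
    apply Finset.card_bij (fun x _ => (Fin.castSucc x.1, Fin.castSucc x.2))
    · rintro ⟨a, b⟩ hx
      simp only [mem_filter, mem_univ, true_and] at hx
      obtain ⟨h1, h2⟩ := hx
      refine Finset.mem_filter.mpr ⟨?_, by simp [Fin.ext_iff]; omega⟩
      rw [hA, Finset.mem_filter]
      refine ⟨mem_univ _, by simpa using h1, ?_⟩
      rw [hσ, extPerm_castSucc, extPerm_castSucc]
      exact Fin.succAbove_lt_succAbove_iff.mpr h2
    · rintro ⟨a, b⟩ _ ⟨a', b'⟩ _ h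
      simp only [Prod.mk.injEq] at h
      have h1 := Fin.castSucc_injective _ h.1
      have h2 := Fin.castSucc_injective _ h.2
      rw [h1, h2]
    · rintro ⟨a, b⟩ hx
      rw [Finset.mem_filter, hA, Finset.mem_filter] at hx
      obtain ⟨⟨-, h1, h2⟩, h3⟩ := hx
      have hb : b ≠ Fin.last n := h3
      have ha : a ≠ Fin.last n := by
        intro hEq
        subst hEq
        exact hb (Fin.last_le_iff.mp h1.le)
      set a' := a.castPred ha with ha'
      set b' := b.castPred hb with hb'
      have haa : Fin.castSucc a' = a := Fin.castSucc_castPred a ha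
      have hbb : Fin.castSucc b' = b := Fin.castSucc_castPred b hb
      refine ⟨(a', b'), ?_, by simp [haa, hbb]⟩
      simp only [mem_filter, mem_univ, true_and]
      constructor
      · rw [← Fin.castSucc_lt_castSucc_iff, haa, hbb]; exact h1
      · rw [← Fin.succAbove_lt_succAbove_iff (p := p)]
        rw [← haa, ← hbb] at h2
        rw [hσ, extPerm_castSucc, extPerm_castSucc] at h2
        exact h2
  show A.card = _
  rw [hsplit, hc1, hc2]

lemma sum_q_pow_coxLen {k : Type*} [CommRing k] (q : k) :
    ∀ n : ℕ, (∑ σ : Equiv.Perm (Fin n), q ^ coxLen σ) =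
      ∏ i ∈ Finset.range n, ∑ j ∈ Finset.range (i + 1), q ^ j := by
  intro n
  induction n with
  | zero =>
    rw [Finset.range_zero, Finset.prod_empty]
    have h0 : ∀ σ : Equiv.Perm (Fin 0), coxLen σ = 0 := by
      intro σ
      unfold coxLen
      simp [Finset.filter_eq_empty_iff]
    rw [Finset.sum_congr rfl (fun σ _ => by rw [h0 σ, pow_zero])]
    simp [Finset.card_univ, Fintype.card_perm]
  | succ m ih =>
    have hre : (∑ σ : Equiv.Perm (Fin (m + 1)), q ^ coxLen σ) =
        ∑ x : Fin (m + 1) × Equiv.Perm (Fin m), q ^ coxLen (extPerm x.1 x.2) :=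
      (Fintype.sum_bijective _ extPerm_bijective _ _ (fun x => rfl)).symm
    rw [hre]
    rw [Fintype.sum_prod_type]
    have : ∀ p : Fin (m + 1), ∑ τ : Equiv.Perm (Fin m), q ^ coxLen (extPerm p τ) =
        q ^ (m - (p : ℕ)) * ∑ τ : Equiv.Perm (Fin m), q ^ coxLen τ := by
      intro p
      rw [Finset.mul_sum]
      apply Finset.sum_congr rfl
      intro τ _
      rw [coxLen_extPerm, pow_add]
    rw [Finset.sum_congr rfl (fun p _ => this p)]
    rw [← Finset.sum_mul, ih, Finset.prod_range_succ]
    rw [mul_comm]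
    congr 1
    have h1 : (∑ p : Fin (m + 1), q ^ (m - (p : ℕ))) =
        ∑ j ∈ Finset.range (m + 1), q ^ (m - j) :=
      Fin.sum_univ_eq_sum_range (fun j => q ^ (m - j)) (m + 1)
    rw [h1]
    have h2 := Finset.sum_range_reflect (fun j => q ^ j) (m + 1)
    simpa using h2

lemma coxLen_adjSwap_mul_dichotomy {n : ℕ} (i : ℕ) (hi : i + 1 < n) (σ : Equiv.Perm (Fin n)) :
    coxLen (adjSwap i hi * σ) = coxLen σ + 1 ∨ coxLen σ = coxLen (adjSwap i hi * σ) + 1 := by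
  have hinv : (adjSwap i hi * σ)⁻¹ = σ⁻¹ * adjSwap i hi := by
    rw [mul_inv_rev, adjSwap_inv]
  have h1 : coxLen (adjSwap i hi * σ) = coxLen (σ⁻¹ * adjSwap i hi) := by
    rw [← coxLen_inv (adjSwap i hi * σ), hinv]
  by_cases h : σ⁻¹ ⟨i, Nat.lt_of_succ_lt hi⟩ < σ⁻¹ ⟨i + 1, hi⟩
  · left
    rw [h1, coxLen_mul_adjSwap_of_lt σ⁻¹ i hi h, coxLen_inv]
  · right
    rw [h1, ← coxLen_inv σ]
    exact coxLen_mul_adjSwap_of_ge σ⁻¹ i hi h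

lemma coxLen_adjSwap_one {n : ℕ} (i : ℕ) (hi : i + 1 < n) : coxLen (adjSwap i hi) = 1 := by
  have h := coxLen_mul_adjSwap_of_lt (1 : Equiv.Perm (Fin n)) i hi (by simp [Fin.lt_def])
  rwa [one_mul, coxLen_one] at h

lemma adjSwap_apply_other {n : ℕ} (i : ℕ) (hi : i + 1 < n) (a : Fin n)
    (h1 : (a : ℕ) ≠ i) (h2 : (a : ℕ) ≠ i + 1) : adjSwap i hi a = a := by
  apply Equiv.swap_apply_of_ne_of_ne <;> simp [Fin.ext_iff, h1, h2]

lemma adjSwap_mul_eq_of_pair {n : ℕ} (i : ℕ) (hi : i + 1 < n) (j : ℕ) (hj : j + 1 < n)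
    (σ τ : Equiv.Perm (Fin n)) (hτdef : τ = σ * adjSwap j hj)
    (hp0 : (τ ⟨j, Nat.lt_of_succ_lt hj⟩ : ℕ) = i)
    (hp1 : (τ ⟨j + 1, hj⟩ : ℕ) = i + 1) :
    adjSwap i hi * τ = σ := by
  have hts : τ * adjSwap j hj = σ := by
    rw [hτdef, mul_assoc, adjSwap_mul_self, mul_one]
  rw [← hts]
  apply Equiv.ext
  intro x
  rw [Equiv.Perm.mul_apply, Equiv.Perm.mul_apply]
  by_cases hx0 : x = ⟨j, Nat.lt_of_succ_lt hj⟩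
  · subst hx0
    rw [adjSwap_apply_lo]
    have e0 : τ ⟨j, Nat.lt_of_succ_lt hj⟩ = ⟨i, Nat.lt_of_succ_lt hi⟩ := Fin.ext hp0
    rw [e0, adjSwap_apply_lo]
    exact (Fin.ext hp1).symm
  · by_cases hx1 : x = ⟨j + 1, hj⟩
    · subst hx1
      rw [adjSwap_apply_hi]
      have e1 : τ ⟨j + 1, hj⟩ = ⟨i + 1, hi⟩ := Fin.ext hp1
      rw [e1, adjSwap_apply_hi]
      exact (Fin.ext hp0).symm
    · have htx : adjSwap j hj x = x :=
        adjSwap_apply_other j hj x (fun hc => hx0 (Fin.ext hc)) (fun hc => hx1 (Fin.ext hc))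
      rw [htx]
      apply adjSwap_apply_other
      · intro hc
        apply hx0
        apply τ.injective
        apply Fin.ext
        rw [hc, hp0]
      · intro hc
        apply hx1
        apply τ.injective
        apply Fin.ext
        rw [hc, hp1]

lemma hecke_left_mul {k : Type*} [CommRing k] {n : ℕ} (q : k)
    {H : Type*} [Ring H] [Algebra k H] (T : Equiv.Perm (Fin n) → H)
    (hT1 : T 1 = 1)
    (hmul : ∀ (σ : Equiv.Perm (Fin n)) (i : ℕ) (hi : i + 1 < n),
      T σ * T (adjSwap i hi) =
        if coxLen (σ * adjSwap i hi) = coxLen σ + 1 then T (σ * adjSwap i hi)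
        else q • T (σ * adjSwap i hi) + (q - 1) • T σ) :
    ∀ (σ : Equiv.Perm (Fin n)) (i : ℕ) (hi : i + 1 < n),
      T (adjSwap i hi) * T σ =
        if coxLen (adjSwap i hi * σ) = coxLen σ + 1 then T (adjSwap i hi * σ)
        else q • T (adjSwap i hi * σ) + (q - 1) • T σ := by
  suffices key : ∀ (N : ℕ) (σ : Equiv.Perm (Fin n)), coxLen σ = N →
      ∀ (i : ℕ) (hi : i + 1 < n),
      T (adjSwap i hi) * T σ =
        if coxLen (adjSwap i hi * σ) = coxLen σ + 1 then T (adjSwap i hi * σ)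
        else q • T (adjSwap i hi * σ) + (q - 1) • T σ by
    intro σ i hi; exact key (coxLen σ) σ rfl i hi
  intro N
  induction N using Nat.strong_induction_on with
  | _ N IH =>
  intro σ hσN i hi
  by_cases hone : σ = 1
  · subst hone
    rw [mul_one, hT1, mul_one, if_pos]
    rw [coxLen_adjSwap_one, coxLen_one]
  · obtain ⟨j, hj, hdesc⟩ := exists_descent σ hone
    obtain ⟨τ, hτdef⟩ : ∃ τ, τ = σ * adjSwap j hj := ⟨_, rfl⟩
    have hts : τ * adjSwap j hj = σ := by
      rw [hτdef, mul_assoc, adjSwap_mul_self, mul_one]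
    have hτj0 : τ ⟨j, Nat.lt_of_succ_lt hj⟩ = σ ⟨j + 1, hj⟩ := by
      rw [hτdef, Equiv.Perm.mul_apply, adjSwap_apply_lo]
    have hτj1 : τ ⟨j + 1, hj⟩ = σ ⟨j, Nat.lt_of_succ_lt hj⟩ := by
      rw [hτdef, Equiv.Perm.mul_apply, adjSwap_apply_hi]
    have hτlt : τ ⟨j, Nat.lt_of_succ_lt hj⟩ < τ ⟨j + 1, hj⟩ := by
      rw [hτj0, hτj1]; exact hdesc
    have hlen : coxLen σ = coxLen τ + 1 := by
      have h := coxLen_mul_adjSwap_of_ge σ j hj (not_lt.mpr hdesc.le)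
      rwa [← hτdef] at h
    have hTστ : T τ * T (adjSwap j hj) = T σ := by
      have h := hmul τ j hj
      rw [hts, if_pos hlen] at h
      exact h
    have hIH := IH (coxLen τ) (by omega) τ rfl i hi
    by_cases hcase : coxLen (adjSwap i hi * τ) = coxLen τ + 1
    · rw [if_pos hcase] at hIH
      by_cases h2 : (adjSwap i hi * τ) ⟨j, Nat.lt_of_succ_lt hj⟩ <
          (adjSwap i hi * τ) ⟨j + 1, hj⟩
      · have hcond := coxLen_mul_adjSwap_of_lt (adjSwap i hi * τ) j hj h2
        have hmul2 := hmul (adjSwap i hi * τ) j hj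
        rw [if_pos hcond] at hmul2
        have hassoc : adjSwap i hi * τ * adjSwap j hj = adjSwap i hi * σ := by
          rw [mul_assoc, hts]
        have hgc : coxLen (adjSwap i hi * σ) = coxLen σ + 1 := by
          rw [← hassoc, hcond, hcase]; omega
        rw [if_pos hgc]
        calc T (adjSwap i hi) * T σ
            = T (adjSwap i hi) * (T τ * T (adjSwap j hj)) := by rw [hTστ]
          _ = T (adjSwap i hi) * T τ * T (adjSwap j hj) := by rw [mul_assoc]
          _ = T (adjSwap i hi * τ) * T (adjSwap j hj) := by rw [hIH]
          _ = T (adjSwap i hi * τ * adjSwap j hj) := hmul2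
          _ = T (adjSwap i hi * σ) := by rw [hassoc]
      · have hpair : (τ ⟨j, Nat.lt_of_succ_lt hj⟩ : ℕ) = i ∧
            (τ ⟨j + 1, hj⟩ : ℕ) = i + 1 := by
          by_contra hcon
          apply h2
          rw [Equiv.Perm.mul_apply, Equiv.Perm.mul_apply]
          exact adjSwap_lt_adjSwap i hi hτlt hcon
        have hexch : adjSwap i hi * τ = σ :=
          adjSwap_mul_eq_of_pair i hi j hj σ τ hτdef hpair.1 hpair.2
        have hss : adjSwap i hi * σ = τ := by
          rw [← hexch, ← mul_assoc, adjSwap_mul_self, one_mul]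
        have hmul3 := hmul σ j hj
        rw [← hτdef, if_neg (by omega)] at hmul3
        rw [if_neg (by rw [hss]; omega), hss]
        calc T (adjSwap i hi) * T σ
            = T (adjSwap i hi) * (T τ * T (adjSwap j hj)) := by rw [hTστ]
          _ = T (adjSwap i hi) * T τ * T (adjSwap j hj) := by rw [mul_assoc]
          _ = T (adjSwap i hi * τ) * T (adjSwap j hj) := by rw [hIH]
          _ = T σ * T (adjSwap j hj) := by rw [hexch]
          _ = q • T τ + (q - 1) • T σ := hmul3
    · have hlen2 : coxLen τ = coxLen (adjSwap i hi * τ) + 1 := by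
        rcases coxLen_adjSwap_mul_dichotomy i hi τ with h | h
        · exact absurd h hcase
        · exact h
      rw [if_neg hcase] at hIH
      have hpairne : ¬((τ ⟨j, Nat.lt_of_succ_lt hj⟩ : ℕ) = i ∧
          (τ ⟨j + 1, hj⟩ : ℕ) = i + 1) := by
        rintro ⟨hp0, hp1⟩
        have hexch : adjSwap i hi * τ = σ :=
          adjSwap_mul_eq_of_pair i hi j hj σ τ hτdef hp0 hp1
        rw [hexch] at hlen2
        omega
      have h2 : (adjSwap i hi * τ) ⟨j, Nat.lt_of_succ_lt hj⟩ <
          (adjSwap i hi * τ) ⟨j + 1, hj⟩ := by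
        rw [Equiv.Perm.mul_apply, Equiv.Perm.mul_apply]
        exact adjSwap_lt_adjSwap i hi hτlt hpairne
      have hcond := coxLen_mul_adjSwap_of_lt (adjSwap i hi * τ) j hj h2
      have hmul2 := hmul (adjSwap i hi * τ) j hj
      rw [if_pos hcond] at hmul2
      have hassoc : adjSwap i hi * τ * adjSwap j hj = adjSwap i hi * σ := by
        rw [mul_assoc, hts]
      rw [if_neg (by rw [← hassoc, hcond]; omega)]
      calc T (adjSwap i hi) * T σ
          = T (adjSwap i hi) * (T τ * T (adjSwap j hj)) := by rw [hTστ]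
        _ = T (adjSwap i hi) * T τ * T (adjSwap j hj) := by rw [mul_assoc]
        _ = (q • T (adjSwap i hi * τ) + (q - 1) • T τ) * T (adjSwap j hj) := by rw [hIH]
        _ = q • (T (adjSwap i hi * τ) * T (adjSwap j hj)) +
            (q - 1) • (T τ * T (adjSwap j hj)) := by
            rw [add_mul, smul_mul_assoc, smul_mul_assoc]
        _ = q • T (adjSwap i hi * σ) + (q - 1) • T σ := by rw [hmul2, hassoc, hTστ]

lemma hecke_left_absorb {k : Type*} [CommRing k] {n : ℕ} (q : k)
    {H : Type*} [Ring H] [Algebra k H] (T : Equiv.Perm (Fin n) → H)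
    (hT1 : T 1 = 1)
    (hmul : ∀ (σ : Equiv.Perm (Fin n)) (i : ℕ) (hi : i + 1 < n),
      T σ * T (adjSwap i hi) =
        if coxLen (σ * adjSwap i hi) = coxLen σ + 1 then T (σ * adjSwap i hi)
        else q • T (σ * adjSwap i hi) + (q - 1) • T σ)
    (i : ℕ) (hi : i + 1 < n) :
    T (adjSwap i hi) * (∑ σ : Equiv.Perm (Fin n), T σ) =
      q • ∑ σ : Equiv.Perm (Fin n), T σ := by
  classical
  have hL := hecke_left_mul q T hT1 hmul
  set s := adjSwap i hi with hs
  rw [Finset.mul_sum]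
  have hstep : ∀ σ, T s * T σ =
      if coxLen (s * σ) = coxLen σ + 1 then T (s * σ)
      else q • T (s * σ) + (q - 1) • T σ := fun σ => hL σ i hi
  set P : Equiv.Perm (Fin n) → Prop := fun σ => coxLen (s * σ) = coxLen σ + 1 with hP
  have hsinv : ∀ σ, s * (s * σ) = σ := by
    intro σ
    rw [← mul_assoc, hs, adjSwap_mul_self, one_mul]
  have hPiff : ∀ σ, P σ → ¬ P (s * σ) := by
    intro σ h hcon
    rw [hP] at h hcon
    rw [hsinv σ] at hcon
    omega
  have hPiff' : ∀ σ, ¬ P σ → P (s * σ) := by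
    intro σ h
    rw [hP] at h ⊢
    rcases coxLen_adjSwap_mul_dichotomy i hi σ with h' | h'
    · rw [← hs] at h'; exact absurd h' h
    · rw [← hs] at h'
      rw [hsinv σ]
      omega
  rw [Finset.sum_congr rfl (fun σ _ => hstep σ)]
  rw [← Finset.sum_filter_add_sum_filter_not univ P]
  have hre : ∑ σ ∈ univ.filter (fun σ => ¬ P σ),
      (if coxLen (s * σ) = coxLen σ + 1 then T (s * σ)
        else q • T (s * σ) + (q - 1) • T σ) =
      ∑ σ ∈ univ.filter P,
      (if coxLen (s * (s * σ)) = coxLen (s * σ) + 1 then T (s * (s * σ))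
        else q • T (s * (s * σ)) + (q - 1) • T (s * σ)) := by
    apply Finset.sum_nbij' (fun σ => s * σ) (fun σ => s * σ)
    · intro σ hσ
      rw [Finset.mem_filter] at hσ ⊢
      exact ⟨mem_univ _, hPiff' σ hσ.2⟩
    · intro σ hσ
      rw [Finset.mem_filter] at hσ ⊢
      exact ⟨mem_univ _, hPiff σ hσ.2⟩
    · intro σ _; exact hsinv σ
    · intro σ _; exact hsinv σ
    · intro σ hσ
      rw [hsinv σ]
  rw [hre]
  have hterm : ∀ σ ∈ univ.filter P,
      (if coxLen (s * σ) = coxLen σ + 1 then T (s * σ)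
        else q • T (s * σ) + (q - 1) • T σ) +
      (if coxLen (s * (s * σ)) = coxLen (s * σ) + 1 then T (s * (s * σ))
        else q • T (s * (s * σ)) + (q - 1) • T (s * σ)) =
      q • T σ + q • T (s * σ) := by
    intro σ hσ
    rw [Finset.mem_filter] at hσ
    have hPσ : coxLen (s * σ) = coxLen σ + 1 := hσ.2
    have hnP : ¬ coxLen (s * (s * σ)) = coxLen (s * σ) + 1 := by
      rw [hsinv σ]; omega
    rw [if_pos hPσ, if_neg hnP, hsinv σ]
    module
  rw [← Finset.sum_add_distrib, Finset.sum_congr rfl hterm]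
  rw [Finset.smul_sum]
  rw [← Finset.sum_filter_add_sum_filter_not univ P (fun σ => q • T σ)]
  rw [Finset.sum_add_distrib]
  congr 1
  apply Finset.sum_nbij' (fun σ => s * σ) (fun σ => s * σ)
  · intro σ hσ
    rw [Finset.mem_filter] at hσ ⊢
    exact ⟨mem_univ _, hPiff σ hσ.2⟩
  · intro σ hσ
    rw [Finset.mem_filter] at hσ ⊢
    exact ⟨mem_univ _, hPiff' σ hσ.2⟩
  · intro σ _; exact hsinv σ
  · intro σ _; exact hsinv σ
  · intro σ _; rfl


theorem range_q_symmetrizer (k : Type*) [Field k] (n : ℕ) (q : k) (hq : q ≠ 0)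
    (hfac : (∏ i ∈ Finset.range n, ∑ j ∈ Finset.range (i + 1), q ^ j) ≠ 0)
    (H : Type*) [Ring H] [Algebra k H] (T : Equiv.Perm (Fin n) → H)
    (hT1 : T 1 = 1)
    (hmul : ∀ (σ : Equiv.Perm (Fin n)) (i : ℕ) (hi : i + 1 < n),
      T σ * T (adjSwap i hi) =
        if coxLen (σ * adjSwap i hi) = coxLen σ + 1 then T (σ * adjSwap i hi)
        else q • T (σ * adjSwap i hi) + (q - 1) • T σ)
    (M : Type*) [AddCommGroup M] [Module k M]
    (μ : H →ₐ[k] Module.End k M)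
    (X : H)
    (hX : X = (∏ i ∈ Finset.range n, ∑ j ∈ Finset.range (i + 1), q ^ j)⁻¹ •
        ∑ σ : Equiv.Perm (Fin n), T σ) :
    LinearMap.range (μ X) =
      ⨅ i : {i : ℕ // i + 1 < n},
        LinearMap.range (μ (T (adjSwap i.1 i.2)) + 1) := by
  classical
  have hTs2 : ∀ (i : ℕ) (hi : i + 1 < n),
      T (adjSwap i hi) * T (adjSwap i hi) = q • (1 : H) + (q - 1) • T (adjSwap i hi) := by
    intro i hi
    have h := hmul (adjSwap i hi) i hi
    rw [adjSwap_mul_self, coxLen_one, coxLen_adjSwap_one, if_neg (by omega), hT1] at h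
    exact h
  apply le_antisymm
  · apply le_iInf
    rintro ⟨i, hi⟩
    intro x hx
    rw [LinearMap.mem_range] at hx
    obtain ⟨m, rfl⟩ := hx
    have hq1 : (1 : k) + q ≠ 0 := by
      have hmem : (1 : ℕ) ∈ Finset.range n := by
        rw [Finset.mem_range]; omega
      have h := Finset.prod_ne_zero_iff.mp hfac 1 hmem
      simpa [Finset.sum_range_succ] using h
    have habs : T (adjSwap i hi) * X = q • X := by
      rw [hX, mul_smul_comm, hecke_left_absorb q T hT1 hmul i hi, smul_comm]
    have hqm : μ (T (adjSwap i hi)) (μ X m) = q • μ X m := by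
      have h := congrArg μ habs
      rw [map_mul, map_smul] at h
      calc μ (T (adjSwap i hi)) (μ X m) = (μ (T (adjSwap i hi)) * μ X) m := rfl
        _ = (q • μ X) m := by rw [h]
        _ = q • μ X m := rfl
    rw [LinearMap.mem_range]
    refine ⟨(1 + q)⁻¹ • μ X m, ?_⟩
    rw [LinearMap.add_apply, Module.End.one_apply, LinearMap.map_smul, hqm]
    rw [smul_smul, ← add_smul]
    have hcoef : (1 + q)⁻¹ * q + (1 + q)⁻¹ = 1 := by
      field_simp
      ring
    rw [hcoef, one_smul]
  · intro m hm
    rw [Submodule.mem_iInf] at hm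
    have heig : ∀ (i : ℕ) (hi : i + 1 < n), μ (T (adjSwap i hi)) m = q • m := by
      intro i hi
      have hmi := hm ⟨i, hi⟩
      rw [LinearMap.mem_range] at hmi
      obtain ⟨y, hy⟩ := hmi
      have hys : m = μ (T (adjSwap i hi)) y + y := by
        rw [← hy, LinearMap.add_apply, Module.End.one_apply]
      have hcomp : μ (T (adjSwap i hi)) (μ (T (adjSwap i hi)) y) =
          q • y + (q - 1) • μ (T (adjSwap i hi)) y := by
        have h := congrArg μ (hTs2 i hi)
        rw [map_mul, map_add, map_smul, map_smul, map_one] at h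
        calc μ (T (adjSwap i hi)) (μ (T (adjSwap i hi)) y) =
            (μ (T (adjSwap i hi)) * μ (T (adjSwap i hi))) y := rfl
          _ = ((q • (1 : Module.End k M)) + (q - 1) • μ (T (adjSwap i hi))) y := by rw [h]
          _ = q • y + (q - 1) • μ (T (adjSwap i hi)) y := by
              rw [LinearMap.add_apply, LinearMap.smul_apply, LinearMap.smul_apply,
                Module.End.one_apply]
      rw [hys, map_add, hcomp]
      module
    have heigall : ∀ (N : ℕ) (σ : Equiv.Perm (Fin n)), coxLen σ = N →
        μ (T σ) m = q ^ coxLen σ • m := by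
      intro N
      induction N using Nat.strong_induction_on with
      | _ N IH =>
      intro σ hσN
      by_cases hone : σ = 1
      · subst hone
        rw [hT1, map_one, coxLen_one, pow_zero, one_smul]
        rfl
      · obtain ⟨j, hj, hdesc⟩ := exists_descent σ hone
        obtain ⟨τ, hτdef⟩ : ∃ τ, τ = σ * adjSwap j hj := ⟨_, rfl⟩
        have hts : τ * adjSwap j hj = σ := by
          rw [hτdef, mul_assoc, adjSwap_mul_self, mul_one]
        have hlen : coxLen σ = coxLen τ + 1 := by
          have h := coxLen_mul_adjSwap_of_ge σ j hj (not_lt.mpr hdesc.le)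
          rwa [← hτdef] at h
        have hTστ : T τ * T (adjSwap j hj) = T σ := by
          have h := hmul τ j hj
          rw [hts, if_pos hlen] at h
          exact h
        have happ : μ (T σ) m = μ (T τ) (μ (T (adjSwap j hj)) m) := by
          rw [← hTστ, map_mul]
          rfl
        rw [happ, heig j hj, LinearMap.map_smul,
          IH (coxLen τ) (by omega) τ rfl, smul_smul, ← pow_succ', ← hlen]
    have hsum : μ (∑ σ : Equiv.Perm (Fin n), T σ) m =
        (∏ i ∈ Finset.range n, ∑ j ∈ Finset.range (i + 1), q ^ j) • m := by
      rw [map_sum, LinearMap.sum_apply]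
      rw [Finset.sum_congr rfl (fun σ _ => heigall (coxLen σ) σ rfl)]
      rw [← Finset.sum_smul, sum_q_pow_coxLen q n]
    rw [LinearMap.mem_range]
    refine ⟨m, ?_⟩
    rw [hX, map_smul, LinearMap.smul_apply, hsum, smul_smul,
      inv_mul_cancel₀ hfac, one_smul]
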